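/- Let θ be a linear order on ℤ with θ = θ+2 and satisfying the reflection condition (a ≺_θ b iff -b-1 ≺_θ -a-1). Suppose there exist two integers a < b of the same parity that are consecutive in θ (no integer c satisfies a ≺_θ c ≺_θ b or b ≺_θ c ≺_θ a), and suppose 1 ≺_θ 2. Then for all integers q, q', we have 2q+1 ≺_θ 2q'. -/

import Mathlib

theorem stmt_3 (r : ℤ → ℤ → Prop) (h : IsStrictTotalOrder ℤ r)
    (hshift : ∀ a b : ℤ, r a b ↔ r (a + 2) (b + 2))
    (hrefl : ∀ a b : ℤ, r a b ↔ r (-b - 1) (-a - 1))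
    (a b : ℤ) (hab : a < b) (hpar : a % 2 = b % 2)
    (hcons : ∀ c : ℤ, ¬(r a c ∧ r c b) ∧ ¬(r b c ∧ r c a))
    (h12 : r 1 2) :
    ∀ q q' : ℤ, r (2 * q + 1) (2 * q') := by
  haveI := h
  have htrans : ∀ {x y z : ℤ}, r x y → r y z → r x z := fun hxy hyz => trans_of r hxy hyz
  have hirr : ∀ x : ℤ, ¬ r x x := fun x => irrefl_of r x
  have htri : ∀ x y : ℤ, x ≠ y → r x y ∨ r y x := by
    intro x y hne
    rcases trichotomous_of r x y with h1 | h1 | h1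
    · exact Or.inl h1
    · exact absurd h1 hne
    · exact Or.inr h1
  have hasym : ∀ {x y : ℤ}, r x y → ¬ r y x := fun hxy hyx => hirr _ (htrans hxy hyx)
  -- transport along argument equalities
  have hR : ∀ {x y x' y' : ℤ}, x = x' → y = y' → r x y → r x' y' := by
    rintro x y _ _ rfl rfl hxy; exact hxy
  -- shift by any even amount
  have hs : ∀ (k x y : ℤ), r x y ↔ r (x + 2 * k) (y + 2 * k) := by
    intro k
    induction k using Int.induction_on with
    | zero => simp
    | succ n ih =>
      intro x y
      have e1 : x + 2 * ((n : ℤ) + 1) = (x + 2 * n) + 2 := by ring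
      have e2 : y + 2 * ((n : ℤ) + 1) = (y + 2 * n) + 2 := by ring
      rw [e1, e2, ← hshift, ih]
    | pred n ih =>
      intro x y
      have e1 : x + 2 * (-(n : ℤ)) = (x + 2 * (-(n : ℤ) - 1)) + 2 := by ring
      have e2 : y + 2 * (-(n : ℤ)) = (y + 2 * (-(n : ℤ) - 1)) + 2 := by ring
      rw [ih x y, e1, e2]
      exact (hshift _ _).symm
  -- reflection in convenient form
  have hrefl' : ∀ x y : ℤ, r (-x - 1) y ↔ r (-y - 1) x := by
    intro x y
    rw [hrefl (-x - 1) y]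
    constructor
    · intro hh; exact hR rfl (by ring) hh
    · intro hh; exact hR rfl (by ring) hh
  -- an even consecutive pair
  obtain ⟨A, B, hA2, hAB, hABpar, hconsE⟩ :
      ∃ A B : ℤ, A % 2 = 0 ∧ A < B ∧ (B - A) % 2 = 0 ∧
        ∀ c : ℤ, ¬(r A c ∧ r c B) ∧ ¬(r B c ∧ r c A) := by
    rcases Int.emod_two_eq a with h0 | h1
    · exact ⟨a, b, h0, hab, by omega, hcons⟩
    · refine ⟨-b - 1, -a - 1, by omega, by omega, by omega, ?_⟩
      intro c
      constructor
      · rintro ⟨hc1, hc2⟩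
        have k1 : r (-c - 1) b := (hrefl' b c).mp hc1
        have k2 : r a (-c - 1) :=
          hR (by ring) rfl ((hrefl' (-c - 1) (-a - 1)).mp (hR (by ring) rfl hc2))
        exact (hcons (-c - 1)).1 ⟨k2, k1⟩
      · rintro ⟨hc1, hc2⟩
        have k1 : r (-c - 1) a := (hrefl' a c).mp hc1
        have k2 : r b (-c - 1) :=
          hR (by ring) rfl ((hrefl' (-c - 1) (-b - 1)).mp (hR (by ring) rfl hc2))
        exact (hcons (-c - 1)).2 ⟨k2, k1⟩
  obtain ⟨s, rfl⟩ : ∃ s : ℤ, A = 2 * s := ⟨A / 2, by omega⟩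
  obtain ⟨d, hd1, rfl⟩ : ∃ d : ℤ, 1 ≤ d ∧ B = 2 * s + 2 * d := ⟨(B - 2 * s) / 2, by omega, by omega⟩
  rcases htri 0 2 (by norm_num) with hinc | hdec
  · -- evens increasing
    have chainU0 : ∀ (n : ℕ) (k : ℤ), r (2 * k) (2 * k + 2 * ((n : ℤ) + 1)) := by
      intro n
      induction n with
      | zero => intro k; exact hR (by ring) (by push_cast; ring) ((hs k 0 2).mp hinc)
      | succ n ih =>
        intro k
        have h2 : r (2 * k + 2 * ((n : ℤ) + 1)) (2 * k + 2 * ((n : ℤ) + 1) + 2) :=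
          hR (by ring) (by ring) ((hs (k + n + 1) 0 2).mp hinc)
        exact hR rfl (by push_cast; ring) (htrans (ih k) h2)
    have chainU : ∀ (n : ℤ), 1 ≤ n → ∀ k : ℤ, r (2 * k) (2 * k + 2 * n) := by
      intro n hn k
      exact hR rfl (by rw [Int.toNat_of_nonneg (show (0:ℤ) ≤ n - 1 by omega)]; ring)
        (chainU0 (n - 1).toNat k)
    -- gap must be 2
    have hd : d = 1 := by
      by_contra hne
      have hd2 : 2 ≤ d := by omega
      have c1 : r (2 * s) (2 * s + 2) := hR (by ring) (by ring) (chainU 1 le_rfl s)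
      have c2 : r (2 * s + 2) (2 * s + 2 * d) :=
        hR (by ring) (by ring) (chainU (d - 1) (by omega) (s + 1))
      exact (hconsE (2 * s + 2)).1 ⟨c1, c2⟩
    subst hd
    -- all pairs (2m, 2m+2) are consecutive
    have hcons2 : ∀ m c : ℤ, ¬(r (2 * m) c ∧ r c (2 * m + 2)) := by
      rintro m c ⟨hc1, hc2⟩
      have k1 : r (2 * s) (c + 2 * (s - m)) :=
        hR (by ring) rfl ((hs (s - m) (2 * m) c).mp hc1)
      have k2 : r (c + 2 * (s - m)) (2 * s + 2 * 1) :=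
        hR rfl (by ring) ((hs (s - m) c (2 * m + 2)).mp hc2)
      exact (hconsE (c + 2 * (s - m))).1 ⟨k1, k2⟩
    have down : ∀ n : ℕ, r 1 (2 * (1 - (n : ℤ))) := by
      intro n
      induction n with
      | zero => exact hR rfl (by norm_num) h12
      | succ n ih =>
        have hnot := hcons2 (-(n : ℤ)) 1
        have h2 : r 1 (2 * (-(n : ℤ)) + 2) := hR rfl (by push_cast; ring) ih
        have hnot2 : ¬ r (2 * (-(n : ℤ))) 1 := fun hc => hnot ⟨hc, h2⟩
        rcases htri 1 (2 * (-(n : ℤ))) (by omega) with hgood | hbad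
        · exact hR rfl (by push_cast; ring) hgood
        · exact absurd hbad hnot2
    have main : ∀ m : ℤ, r 1 (2 * m) := by
      intro m
      rcases le_or_gt m 1 with hm | hm
      · have := down (1 - m).toNat
        exact hR rfl (by rw [Int.toNat_of_nonneg (by omega)]; ring) this
      · have h2 : r 2 (2 * m) := hR (by ring) (by ring) (chainU (m - 1) (by omega) 1)
        exact htrans h12 h2
    intro q q'
    exact hR (by ring) (by ring) ((hs q 1 (2 * (q' - q))).mp (main (q' - q)))
  · -- evens decreasing
    have chainD0 : ∀ (n : ℕ) (k : ℤ), r (2 * k + 2 * ((n : ℤ) + 1)) (2 * k) := by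
      intro n
      induction n with
      | zero => intro k; exact hR (by push_cast; ring) (by ring) ((hs k 2 0).mp hdec)
      | succ n ih =>
        intro k
        have h2 : r (2 * k + 2 * ((n : ℤ) + 1) + 2) (2 * k + 2 * ((n : ℤ) + 1)) :=
          hR (by ring) (by ring) ((hs (k + n + 1) 2 0).mp hdec)
        exact hR (by push_cast; ring) rfl (htrans h2 (ih k))
    have chainD : ∀ (n : ℤ), 1 ≤ n → ∀ k : ℤ, r (2 * k + 2 * n) (2 * k) := by
      intro n hn k
      exact hR (by rw [Int.toNat_of_nonneg (show (0:ℤ) ≤ n - 1 by omega)]; ring) rfl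
        (chainD0 (n - 1).toNat k)
    have hd : d = 1 := by
      by_contra hne
      have hd2 : 2 ≤ d := by omega
      have c1 : r (2 * s + 2 * d) (2 * s + 2) :=
        hR (by ring) (by ring) (chainD (d - 1) (by omega) (s + 1))
      have c2 : r (2 * s + 2) (2 * s) := hR (by ring) (by ring) (chainD 1 le_rfl s)
      exact (hconsE (2 * s + 2)).2 ⟨c1, c2⟩
    subst hd
    have hcons2 : ∀ m c : ℤ, ¬(r (2 * m + 2) c ∧ r c (2 * m)) := by
      rintro m c ⟨hc1, hc2⟩
      have k1 : r (2 * s + 2 * 1) (c + 2 * (s - m)) :=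
        hR (by ring) rfl ((hs (s - m) (2 * m + 2) c).mp hc1)
      have k2 : r (c + 2 * (s - m)) (2 * s) :=
        hR rfl (by ring) ((hs (s - m) c (2 * m)).mp hc2)
      exact (hconsE (c + 2 * (s - m))).2 ⟨k1, k2⟩
    have up : ∀ n : ℕ, r 1 (2 * (1 + (n : ℤ))) := by
      intro n
      induction n with
      | zero => exact hR rfl (by norm_num) h12
      | succ n ih =>
        have hnot := hcons2 (1 + (n : ℤ)) 1
        have h2 : r 1 (2 * (1 + (n : ℤ))) := ih
        have hnot2 : ¬ r (2 * (1 + (n : ℤ)) + 2) 1 := fun hc => hnot ⟨hc, h2⟩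
        rcases htri 1 (2 * (1 + (n : ℤ)) + 2) (by omega) with hgood | hbad
        · exact hR rfl (by push_cast; ring) hgood
        · exact absurd hbad hnot2
    have main : ∀ m : ℤ, r 1 (2 * m) := by
      intro m
      rcases le_or_gt 1 m with hm | hm
      · have := up (m - 1).toNat
        exact hR rfl (by rw [Int.toNat_of_nonneg (by omega)]; ring) this
      · have h2 : r 2 (2 * m) := hR (by ring) (by ring) (chainD (1 - m) (by omega) m)
        exact htrans h12 h2
    intro q q'
    exact hR (by ring) (by ring) ((hs q 1 (2 * (q' - q))).mp (main (q' - q)))
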